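/- Let U : C* → C be an expansion with unique restrictions, let A be an object of C, 𝒜 ∈ U⁻¹(A), and let {𝒜ᵢ : i ∈ I} be all objects of C* isomorphic to 𝒜 lying in U⁻¹(A). Then Aut_C(A) is the disjoint union over i ∈ I of iso_{C*}(𝒜ᵢ, 𝒜). Consequently, if I and Aut_C(A) are finite then |Aut_C(A)| = |I| · |Aut_{C*}(𝒜)|. -/

import Mathlib

open CategoryTheory

universe v u v' u'

variable {C : Type u} [Category.{v} C] {D : Type u'} [Category.{v'} D]

def InHom (U : D ⥤ C) {A : C} (X Y : D) (h : U.obj X = A) (e : A ⟶ U.obj Y) : Prop :=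
  ∃ f : X ⟶ Y, U.map f = eqToHom h ≫ e

def ObjSurjective (U : D ⥤ C) : Prop := ∀ A : C, ∃ X : D, U.obj X = A

def HomInjective (U : D ⥤ C) : Prop :=
  ∀ (X Y : D) (f g : X ⟶ Y), U.map f = U.map g → f = g

def HasUniqueRestrictions (U : D ⥤ C) : Prop :=
  ∀ (Y : D) (A : C) (e : A ⟶ U.obj Y),
    ∃! X : {Z : D // U.obj Z = A}, InHom U X.1 Y X.2 e

def Reasonable (U : D ⥤ C) : Prop :=
  ∀ (A B : C) (e : A ⟶ B) (X : D) (h : U.obj X = A),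
    ∃ (Y : D) (h' : U.obj Y = B) (f : X ⟶ Y),
      U.map f = eqToHom h ≫ e ≫ eqToHom h'.symm

theorem stmt13 (U : D ⥤ C)
    (hsurj : ObjSurjective U) (hinj : HomInjective U)
    (hur : HasUniqueRestrictions U)
    (A : C) (X₀ : D) (hX₀ : U.obj X₀ = A) :
    (∀ φ : Aut A, ∃! p : {X : D // U.obj X = A},
        ∃ e : p.1 ≅ X₀, U.map e.hom = eqToHom p.2 ≫ φ.hom ≫ eqToHom hX₀.symm) ∧
    (Finite {X : D // U.obj X = A ∧ Nonempty (X ≅ X₀)} → Finite (Aut A) →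
      Nat.card (Aut A) =
        Nat.card {X : D // U.obj X = A ∧ Nonempty (X ≅ X₀)} * Nat.card (Aut X₀)) := by
  classical
  have key : ∀ φ : Aut A, ∃! p : {X : D // U.obj X = A},
      ∃ e : p.1 ≅ X₀, U.map e.hom = eqToHom p.2 ≫ φ.hom ≫ eqToHom hX₀.symm := by
    intro φ
    obtain ⟨⟨X, hX⟩, ⟨f, hf⟩, huniq⟩ := hur X₀ A (φ.hom ≫ eqToHom hX₀.symm)
    obtain ⟨⟨Y, hY⟩, ⟨g, hg⟩, _⟩ := hur X A (φ.inv ≫ eqToHom hX.symm)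
    have hid := hur X₀ A (eqToHom hX₀.symm)
    have h1 : InHom U X₀ X₀ hX₀ (eqToHom hX₀.symm) := ⟨𝟙 X₀, by simp⟩
    have h2 : InHom U Y X₀ hY (eqToHom hX₀.symm) := by
      refine ⟨g ≫ f, ?_⟩
      rw [U.map_comp, hg, hf]
      simp
      erw [Iso.inv_hom_id_assoc]
      simp
    have hYX : (⟨Y, hY⟩ : {Z : D // U.obj Z = A}) = ⟨X₀, hX₀⟩ :=
      hid.unique h2 h1
    have hYval : Y = X₀ := congrArg Subtype.val hYX
    subst hYval
    have hgf : g ≫ f = 𝟙 Y := by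
      apply hinj
      rw [U.map_comp, hg, hf]
      simp
      erw [Iso.inv_hom_id_assoc]
      simp
    have hfg : f ≫ g = 𝟙 X := by
      apply hinj
      rw [U.map_comp, hf, hg]
      simp
      erw [Iso.hom_inv_id_assoc]
      simp
    refine ⟨⟨X, hX⟩, ⟨⟨f, g, hfg, hgf⟩, by simpa using hf⟩, ?_⟩
    rintro ⟨X', hX'⟩ ⟨e', he'⟩
    exact huniq ⟨X', hX'⟩ ⟨e'.hom, by rw [he']⟩
  refine ⟨key, ?_⟩
  intro hfin1 hfin2
  set S := {X : D // U.obj X = A ∧ Nonempty (X ≅ X₀)} with hS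
  let F : S × Aut X₀ → Aut A := fun q =>
    eqToIso q.1.2.1.symm ≪≫ U.mapIso (q.1.2.2.some ≪≫ q.2) ≪≫ eqToIso hX₀
  have hbij : Function.Bijective F := by
    constructor
    · rintro ⟨⟨X, hX, hne⟩, a⟩ ⟨⟨X', hX', hne'⟩, a'⟩ hFq
      have hh := congrArg Iso.hom hFq
      simp only [F, Iso.trans_hom, eqToIso.hom, Functor.mapIso_hom, Category.assoc] at hh
      have heq : eqToHom hX.symm ≫ U.map (hne.some ≪≫ a).hom =
          eqToHom hX'.symm ≫ U.map (hne'.some ≪≫ a').hom := by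
        have := hh
        rw [← Category.assoc, ← Category.assoc] at this
        exact (cancel_mono (eqToHom hX₀)).mp (by simpa using this)
      have hXX' : (⟨X, hX⟩ : {Z : D // U.obj Z = A}) = ⟨X', hX'⟩ := by
        refine (hur X₀ A (eqToHom hX.symm ≫ U.map (hne.some ≪≫ a).hom)).unique
          ⟨(hne.some ≪≫ a).hom, by simp⟩ ⟨(hne'.some ≪≫ a').hom, ?_⟩
        rw [heq]
        simp
      have hXval : X = X' := congrArg Subtype.val hXX'
      subst hXval
      have hne'' : hne = hne' := rfl
      subst hne''
      have hhoms : (hne.some ≪≫ a).hom = (hne.some ≪≫ a').hom := by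
        apply hinj
        have := heq
        rwa [cancel_epi (eqToHom hX.symm)] at this
      change hne.some.hom ≫ a.hom = hne.some.hom ≫ a'.hom at hhoms
      rw [cancel_epi] at hhoms
      have haa : a = a' := Iso.ext hhoms
      simp [haa]
    · intro φ
      obtain ⟨⟨X, hX⟩, ⟨e, he⟩, _⟩ := key φ
      refine ⟨(⟨X, hX, ⟨e⟩⟩, (⟨e⟩ : Nonempty (X ≅ X₀)).some.symm ≪≫ e), ?_⟩
      have hcomp : U.map ((⟨e⟩ : Nonempty (X ≅ X₀)).some.hom ≫
          (⟨e⟩ : Nonempty (X ≅ X₀)).some.inv ≫ e.hom) = U.map e.hom := by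
        rw [Iso.hom_inv_id_assoc]
      apply Iso.ext
      simp only [F, Iso.trans_hom, Iso.symm_hom, eqToIso.hom, Functor.mapIso_hom]
      rw [hcomp, he]
      simp
  rw [Nat.card_congr (Equiv.ofBijective F hbij).symm, Nat.card_prod]
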